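/- arXiv:2101.11139 — 4 statements merged into one kernel-verified Lean document; each statement's English description precedes it below -/
import Mathlib

section
/- Let X be a real-valued random variable and Z be a standard Gaussian random variable independent of X. If X and X+Z are independent, then X is almost surely constant. -/
open MeasureTheory ProbabilityTheory Real

lemma aux_integrable_arctan {α : Type*} [MeasurableSpace α] (ν : Measure α)
    [IsProbabilityMeasure ν] (g : α → ℝ) (hg : Measurable g) :
    Integrable (fun a => Real.arctan (g a)) ν := by
  refine Integrable.mono' (integrable_const (π / 2))
    ((Real.measurable_arctan.comp hg).aestronglyMeasurable) ?_
  filter_upwards with a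
  rw [Real.norm_eq_abs]
  exact (abs_lt.mpr ⟨neg_pi_div_two_lt_arctan _, arctan_lt_pi_div_two _⟩).le

noncomputable def smooth_arctan (x : ℝ) : ℝ := ∫ z, Real.arctan (x + z) ∂(gaussianReal 0 1)

lemma smooth_arctan_abs_le (x : ℝ) : |smooth_arctan x| ≤ π / 2 := by
  rw [← Real.norm_eq_abs]
  have := norm_integral_le_of_norm_le_const (μ := gaussianReal 0 1)
    (f := fun z => Real.arctan (x + z)) (C := π / 2) ?_
  · simpa [smooth_arctan] using this
  · filter_upwards with z
    rw [Real.norm_eq_abs]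
    exact (abs_lt.mpr ⟨neg_pi_div_two_lt_arctan _, arctan_lt_pi_div_two _⟩).le

section sm
variable {α : Type*} [MeasurableSpace α] (ν : Measure α) [IsProbabilityMeasure ν]

lemma smooth_arctan_measurable : Measurable smooth_arctan := by
  apply (continuous_of_dominated (F := fun x z => Real.arctan (x + z))
    (bound := fun _ => π / 2) ?_ ?_ ?_ ?_).measurable
  · intro x
    exact (Real.measurable_arctan.comp (measurable_const.add measurable_id)).aestronglyMeasurable
  · intro x
    filter_upwards with z
    rw [Real.norm_eq_abs]
    exact (abs_lt.mpr ⟨neg_pi_div_two_lt_arctan _, arctan_lt_pi_div_two _⟩).le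
  · exact integrable_const _
  · filter_upwards with z
    exact Real.continuous_arctan.comp (continuous_id.add continuous_const)

lemma aux_integrable_smooth (g : α → ℝ) (hg : Measurable g) :
    Integrable (fun a => smooth_arctan (g a)) ν := by
  refine Integrable.mono' (integrable_const (π / 2))
    ((smooth_arctan_measurable.comp hg).aestronglyMeasurable) ?_
  filter_upwards with a
  rw [Real.norm_eq_abs]
  exact smooth_arctan_abs_le _

end sm

lemma smooth_arctan_strictMono : StrictMono smooth_arctan := by
  intro a b hab
  have hint : ∀ c : ℝ, Integrable (fun z => Real.arctan (c + z)) (gaussianReal 0 1) :=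
    fun c => aux_integrable_arctan _ _ (measurable_const.add measurable_id)
  have hpos : 0 < ∫ z, (Real.arctan (b + z) - Real.arctan (a + z)) ∂(gaussianReal 0 1) := by
    rw [integral_pos_iff_support_of_nonneg]
    · have hsupp : Function.support (fun z => Real.arctan (b + z) - Real.arctan (a + z))
          = Set.univ := by
        ext z
        simp only [Function.mem_support, Set.mem_univ, iff_true]
        exact sub_ne_zero.mpr (Real.arctan_strictMono (by linarith : a + z < b + z)).ne'
      rw [hsupp]
      simp
    · intro z
      simpa using (Real.arctan_strictMono (by linarith : a + z < b + z)).le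
    · exact (hint b).sub (hint a)
  have := integral_sub (hint b) (hint a)
  rw [this] at hpos
  unfold smooth_arctan
  linarith

/-- If `Z` is standard Gaussian independent of the real random variable `X`, and `X` is
independent of `X + Z`, then `X` is almost surely constant. -/
theorem stmt_2 {Ω : Type*} [MeasurableSpace Ω] (μ : Measure Ω) [IsProbabilityMeasure μ]
    (X Z : Ω → ℝ) (hX : Measurable X) (hZ : Measurable Z)
    (hZgauss : μ.map Z = gaussianReal 0 1)
    (hXZindep : IndepFun X Z μ)
    (hindep : IndepFun X (fun ω => X ω + Z ω) μ) :
    ∃ c : ℝ, X =ᵐ[μ] fun _ => c := by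
  set γ : Measure ℝ := gaussianReal 0 1 with hγ
  set ν : Measure ℝ := μ.map X with hν
  have hνprob : IsProbabilityMeasure ν := Measure.isProbabilityMeasure_map hX.aemeasurable
  set h : ℝ → ℝ := smooth_arctan with hh
  have hmeas : Measurable h := smooth_arctan_measurable
  -- joint law
  have hmap : μ.map (fun ω => (X ω, Z ω)) = ν.prod γ := by
    rw [hν, ← hZgauss]
    exact (indepFun_iff_map_prod_eq_prod_map_map hX.aemeasurable hZ.aemeasurable).mp hXZindep
  have hpairmeas : Measurable (fun ω => (X ω, Z ω)) := hX.prodMk hZ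
  -- E[arctan(X+Z)] = ∫ h dν
  have E1 : ∫ ω, Real.arctan (X ω + Z ω) ∂μ = ∫ x, h x ∂ν := by
    have : ∫ ω, Real.arctan (X ω + Z ω) ∂μ
        = ∫ p : ℝ × ℝ, Real.arctan (p.1 + p.2) ∂(ν.prod γ) := by
      rw [← hmap, integral_map hpairmeas.aemeasurable]
      exact (Real.measurable_arctan.comp (measurable_fst.add measurable_snd)).aestronglyMeasurable
    rw [this, integral_prod]
    · rfl
    · exact aux_integrable_arctan _ _ (measurable_fst.add measurable_snd)
  -- E[h(X) * arctan(X+Z)] = ∫ h^2 dν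
  have E2 : ∫ ω, h (X ω) * Real.arctan (X ω + Z ω) ∂μ = ∫ x, h x * h x ∂ν := by
    have hFmeas : Measurable (fun p : ℝ × ℝ => h p.1 * Real.arctan (p.1 + p.2)) :=
      (hmeas.comp measurable_fst).mul
        (Real.measurable_arctan.comp (measurable_fst.add measurable_snd))
    have : ∫ ω, h (X ω) * Real.arctan (X ω + Z ω) ∂μ
        = ∫ p : ℝ × ℝ, h p.1 * Real.arctan (p.1 + p.2) ∂(ν.prod γ) := by
      rw [← hmap, integral_map hpairmeas.aemeasurable hFmeas.aestronglyMeasurable]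
    rw [this]
    have hFint : Integrable (fun p : ℝ × ℝ => h p.1 * Real.arctan (p.1 + p.2)) (ν.prod γ) := by
      refine Integrable.mono' (integrable_const ((π / 2) * (π / 2)))
        hFmeas.aestronglyMeasurable ?_
      filter_upwards with p
      rw [Real.norm_eq_abs, abs_mul]
      have h1 : |h p.1| ≤ π / 2 := smooth_arctan_abs_le _
      have h2 : |Real.arctan (p.1 + p.2)| ≤ π / 2 :=
        (abs_lt.mpr ⟨neg_pi_div_two_lt_arctan _, arctan_lt_pi_div_two _⟩).le
      exact mul_le_mul h1 h2 (abs_nonneg _) (by positivity)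
    rw [integral_prod _ hFint]
    refine integral_congr_ae (Filter.Eventually.of_forall fun x => ?_)
    show (∫ y, h x * Real.arctan (x + y) ∂γ) = h x * h x
    rw [integral_const_mul]
    rfl
  -- E[h(X)] = ∫ h dν
  have E3 : ∫ ω, h (X ω) ∂μ = ∫ x, h x ∂ν := by
    rw [hν, integral_map hX.aemeasurable hmeas.aestronglyMeasurable]
  -- independence gives product formula
  have hI : IndepFun (fun ω => h (X ω)) (fun ω => Real.arctan (X ω + Z ω)) μ :=
    hindep.comp hmeas Real.measurable_arctan
  have key : ∫ ω, h (X ω) * Real.arctan (X ω + Z ω) ∂μ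
      = (∫ ω, h (X ω) ∂μ) * ∫ ω, Real.arctan (X ω + Z ω) ∂μ := by
    have := hI.integral_mul_eq_mul_integral ((hmeas.comp hX).aestronglyMeasurable)
      ((Real.measurable_arctan.comp (hX.add hZ)).aestronglyMeasurable)
    simpa using this
  -- so ∫ h² dν = (∫ h dν)²
  have hsq : ∫ x, h x * h x ∂ν = (∫ x, h x ∂ν) * ∫ x, h x ∂ν := by
    rw [← E2, key, E1, E3]
  set m : ℝ := ∫ x, h x ∂ν with hm
  have hint_h : Integrable h ν := aux_integrable_smooth ν id measurable_id
  have hint_h2 : Integrable (fun x => h x * h x) ν := by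
    refine Integrable.mono' (integrable_const ((π / 2) * (π / 2)))
      (hmeas.mul hmeas).aestronglyMeasurable ?_
    filter_upwards with x
    rw [Real.norm_eq_abs, abs_mul]
    exact mul_le_mul (smooth_arctan_abs_le _) (smooth_arctan_abs_le _)
      (abs_nonneg _) (by positivity)
  have hzero : ∫ x, (h x - m) ^ 2 ∂ν = 0 := by
    have expand : ∀ x : ℝ, (h x - m) ^ 2 = h x * h x - (2 * m) * h x + m ^ 2 := by
      intro x; ring
    calc ∫ x, (h x - m) ^ 2 ∂ν
        = ∫ x, (h x * h x - (2 * m) * h x + m ^ 2) ∂ν := by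
          simp_rw [expand]
      _ = (∫ x, h x * h x ∂ν) - (2 * m) * (∫ x, h x ∂ν) + m ^ 2 := by
          have i2 : Integrable (fun x => (2 * m) * h x) ν := hint_h.const_mul _
          have i1 : Integrable (fun x => h x * h x - (2 * m) * h x) ν := hint_h2.sub i2
          rw [integral_add i1 (integrable_const _), integral_sub hint_h2 i2,
            integral_const_mul, integral_const]
          simp
      _ = 0 := by rw [hsq, ← hm]; ring
  have haeν : (fun x => (h x - m) ^ 2) =ᵐ[ν] 0 := by
    rw [← integral_eq_zero_iff_of_nonneg]
    · exact hzero
    · intro x; positivity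
    · have i2 : Integrable (fun x => (2 * m) * h x) ν := hint_h.const_mul _
      have : Integrable (fun x => h x * h x - (2 * m) * h x + m ^ 2) ν :=
        (hint_h2.sub i2).add (integrable_const _)
      refine this.congr ?_
      filter_upwards with x
      ring
  have haeν' : ∀ᵐ x ∂ν, h x = m := by
    filter_upwards [haeν] with x hx
    have : (h x - m) ^ 2 = 0 := hx
    have := pow_eq_zero_iff (n := 2) (by norm_num) |>.mp this
    linarith
  have haeμ : ∀ᵐ ω ∂μ, h (X ω) = m := by
    rw [hν] at haeν'
    exact (ae_map_iff hX.aemeasurable (measurableSet_eq_fun hmeas measurable_const)).mp haeν'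
  haveI : Filter.NeBot (ae μ) := ae_neBot.mpr (IsProbabilityMeasure.ne_zero μ)
  obtain ⟨ω₀, hω₀⟩ := haeμ.exists
  refine ⟨X ω₀, ?_⟩
  filter_upwards [haeμ] with ω hω
  exact smooth_arctan_strictMono.injective (by rw [hh] at hω hω₀; rw [hω, hω₀])
end

section
/- Define 𝖢(x) = (1/2)·log₂(1+x) for x ≥ 0. For nonnegative reals S₁₂, S₁₃, S₂₃ with S₁₂ ≥ S₂₃, the value max over ρ∈[0,1] of min{ 𝖢(S₁₃ + S₂₃ + 2ρ√(S₁₃S₂₃)), 𝖢((1−ρ²)(S₁₃+S₁₂)) } equals 𝖢( (√(S₁₂S₂₃) + √(S₁₃(S₁₃+S₁₂−S₂₃)))² / (S₁₃+S₁₂) ). -/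
open Real

/-- `𝖢(x) = (1/2)·log₂(1+x)`. -/
noncomputable def Cfun (x : ℝ) : ℝ := (1/2) * Real.logb 2 (1 + x)

lemma Cfun_mono {x y : ℝ} (hx : 0 ≤ x) (hxy : x ≤ y) : Cfun x ≤ Cfun y := by
  unfold Cfun
  have h1 : (0:ℝ) < 1 + x := by linarith
  have := Real.logb_le_logb_of_le (b := 2) (by norm_num) h1 (by linarith : 1 + x ≤ 1 + y)
  linarith

/-- Closed form of the cut-set bound for the Gaussian relay channel when `S₁₂ ≥ S₂₃`:
the maximum over `ρ ∈ [0,1]` of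
`min{𝖢(S₁₃+S₂₃+2ρ√(S₁₃S₂₃)), 𝖢((1−ρ²)(S₁₃+S₁₂))}` equals
`𝖢((√(S₁₂S₂₃)+√(S₁₃(S₁₃+S₁₂−S₂₃)))²/(S₁₃+S₁₂))`. -/
theorem stmt_3 (S12 S13 S23 : ℝ) (h12 : 0 ≤ S12) (h13 : 0 ≤ S13) (h23 : 0 ≤ S23)
    (h : S12 ≥ S23) :
    IsGreatest
      ((fun ρ : ℝ =>
          min (Cfun (S13 + S23 + 2 * ρ * Real.sqrt (S13 * S23)))
            (Cfun ((1 - ρ^2) * (S13 + S12)))) '' Set.Icc 0 1)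
      (Cfun ((Real.sqrt (S12 * S23) + Real.sqrt (S13 * (S13 + S12 - S23)))^2
        / (S13 + S12))) := by
  by_cases hT0 : S13 + S12 = 0
  · have h13' : S13 = 0 := by linarith
    have h12' : S12 = 0 := by linarith
    have h23' : S23 = 0 := by linarith
    subst h13' h12' h23'
    constructor
    · exact ⟨0, by norm_num, by norm_num⟩
    · rintro y ⟨ρ, hρ, rfl⟩
      norm_num
  · have hT : 0 < S13 + S12 := lt_of_le_of_ne (by linarith) (Ne.symm hT0)
    have hE : 0 ≤ S13 + S12 - S23 := by linarith
    set u := Real.sqrt (S13 * S23) with hudef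
    set w := Real.sqrt (S12 * (S13 + S12 - S23)) with hwdef
    have hu0 : 0 ≤ u := Real.sqrt_nonneg _
    have hw0 : 0 ≤ w := Real.sqrt_nonneg _
    have hu2 : u ^ 2 = S13 * S23 := Real.sq_sqrt (by positivity)
    have hw2 : w ^ 2 = S12 * (S13 + S12 - S23) := Real.sq_sqrt (by positivity)
    have huw : Real.sqrt (S12 * S23) * Real.sqrt (S13 * (S13 + S12 - S23)) = u * w := by
      rw [hudef, hwdef, ← Real.sqrt_mul (by positivity), ← Real.sqrt_mul (by positivity)]
      congr 1
      ring
    have hVnum : (Real.sqrt (S12 * S23) + Real.sqrt (S13 * (S13 + S12 - S23))) ^ 2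
        = S12 * S23 + S13 * (S13 + S12 - S23) + 2 * (u * w) := by
      rw [add_sq, Real.sq_sqrt (by positivity), Real.sq_sqrt (by positivity)]
      linear_combination 2 * huw
    set ρs := (w - u) / (S13 + S12) with hρdef
    have huw_le : u ≤ w := by
      rw [hudef, hwdef]
      exact Real.sqrt_le_sqrt (by nlinarith)
    have hρ0 : 0 ≤ ρs := div_nonneg (by linarith) hT.le
    have hρ1 : ρs ≤ 1 := by
      rw [hρdef, div_le_one hT]
      nlinarith [hu2, hw2, mul_nonneg h13 h12, mul_nonneg hT.le hu0]
    have key1' : (S13 + S23) * (S13 + S12) + 2 * (w - u) * u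
        = S12 * S23 + S13 * (S13 + S12 - S23) + 2 * (u * w) := by
      linear_combination (-2 : ℝ) * hu2
    have key2' : (S13 + S12) ^ 2 - (w - u) ^ 2
        = S12 * S23 + S13 * (S13 + S12 - S23) + 2 * (u * w) := by
      linear_combination (-1 : ℝ) * hw2 + (-1 : ℝ) * hu2
    have key1 : S13 + S23 + 2 * ρs * u
        = (Real.sqrt (S12 * S23) + Real.sqrt (S13 * (S13 + S12 - S23))) ^ 2 / (S13 + S12) := by
      rw [hVnum, hρdef, ← key1']
      field_simp
    have key2 : (1 - ρs ^ 2) * (S13 + S12)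
        = (Real.sqrt (S12 * S23) + Real.sqrt (S13 * (S13 + S12 - S23))) ^ 2 / (S13 + S12) := by
      rw [hVnum, hρdef, ← key2']
      field_simp
    constructor
    · refine ⟨ρs, ⟨hρ0, hρ1⟩, ?_⟩
      simp only
      rw [key1, key2, min_self]
    · rintro y ⟨ρ, ⟨hρl, hρr⟩, rfl⟩
      simp only
      rcases le_total ρ ρs with hle | hle
      · refine le_trans (min_le_left _ _) ?_
        rw [← key1]
        refine Cfun_mono ?_ ?_
        · have := mul_nonneg hρl hu0
          linarith
        · have := mul_le_mul_of_nonneg_right hle hu0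
          linarith
      · refine le_trans (min_le_right _ _) ?_
        rw [← key2]
        refine Cfun_mono ?_ ?_
        · have h1 : 0 ≤ 1 - ρ ^ 2 := by nlinarith
          exact mul_nonneg h1 hT.le
        · have h2 : ρs ^ 2 ≤ ρ ^ 2 := pow_le_pow_left₀ hρ0 hle 2
          have := mul_le_mul_of_nonneg_right (by linarith : 1 - ρ ^ 2 ≤ 1 - ρs ^ 2) hT.le
          linarith
end

section
/- For positive reals S₁₂, S₁₃, S₂₃, the quadratic λ² (S₁₂+1) − λ(S₂₃S₁₂(1−ρ²) + S₁₃ + S₂₃ + S₁₂ + 2 + 2ρ√(S₁₃S₂₃)) + (2ρ√(S₁₃S₂₃) + S₁₃ + S₂₃ + 1) = 0 in λ, with ρ ∈ [−1,1], has two real roots, i.e., its discriminant is nonnegative. -/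
/-- The quadratic `λ²(S₁₂+1) − λ(S₂₃S₁₂(1−ρ²)+S₁₃+S₂₃+S₁₂+2+2ρ√(S₁₃S₂₃))
+ (2ρ√(S₁₃S₂₃)+S₁₃+S₂₃+1) = 0` in `λ`, with `ρ ∈ [−1,1]` and positive `S₁₂,S₁₃,S₂₃`,
has two real roots, i.e., its discriminant is nonnegative. -/
theorem stmt_17 (S12 S13 S23 ρ : ℝ) (h12 : 0 < S12) (h13 : 0 < S13) (h23 : 0 < S23)
    (hρ : ρ ∈ Set.Icc (-1 : ℝ) 1) :
    0 ≤ (S23 * S12 * (1 - ρ^2) + S13 + S23 + S12 + 2 + 2 * ρ * Real.sqrt (S13 * S23))^2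
        - 4 * (S12 + 1) * (2 * ρ * Real.sqrt (S13 * S23) + S13 + S23 + 1) := by
  obtain ⟨hρ1, hρ2⟩ := hρ
  set s := Real.sqrt (S13 * S23) with hs
  have hs0 : 0 ≤ s := Real.sqrt_nonneg _
  have hs2 : s ^ 2 = S13 * S23 := Real.sq_sqrt (by positivity)
  have hc : 0 < 2 * ρ * s + S13 + S23 + 1 := by
    nlinarith [sq_nonneg (Real.sqrt S13 - Real.sqrt S23), Real.sq_sqrt h13.le,
      Real.sq_sqrt h23.le, Real.sqrt_mul_self h13.le,
      Real.sqrt_mul h13.le S23, sq_nonneg (s + ρ * s), sq_nonneg (s - ρ * s)]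
  have hb : S12 + 1 + (2 * ρ * s + S13 + S23 + 1)
      ≤ S23 * S12 * (1 - ρ^2) + S13 + S23 + S12 + 2 + 2 * ρ * s := by
    nlinarith [mul_nonneg (mul_nonneg h23.le h12.le) (by nlinarith : (0:ℝ) ≤ 1 - ρ^2)]
  nlinarith [sq_nonneg (S12 + 1 - (2 * ρ * s + S13 + S23 + 1)), hc, hb,
    mul_pos (by linarith : (0:ℝ) < S12 + 1) hc]
end

section
/- Let p(x, y_r) be a joint distribution on {0,1}×{0,1} and let f(p₀₀,p₀₁,p₁₀,p₁₁) be any real-valued function satisfying the symmetry f(p₀₀,p₀₁,p₁₀,p₁₁) = f(p₁₁,p₁₀,p₀₁,p₀₀). Define g(c) = max{ f(p₀₀,p₀₁,p₁₀,p₁₁) : p₀₁+p₁₀ = c } over the probability simplex, and let 𝒞_c[g] be the upper concave envelope of g on [0,1] and 𝒞_p[f] the upper concave envelope of f on the simplex. If f is continuous, then 𝒞_c[g](ρ) = 𝒞_p[f]((1−ρ)/2, ρ/2, ρ/2, (1−ρ)/2) for every ρ ∈ [0,1]. -/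
open Finset

/-- The upper concave envelope of `h` on a set `s`: the pointwise smallest concave
function on `s` dominating `h` on `s`, evaluated at `x`. -/
noncomputable def concaveEnvelope {E : Type*} [AddCommMonoid E] [Module ℝ E]
    (s : Set E) (h : E → ℝ) (x : E) : ℝ :=
  sInf {t : ℝ | ∃ φ : E → ℝ, ConcaveOn ℝ s φ ∧ (∀ y ∈ s, h y ≤ φ y) ∧ t = φ x}

/-- The probability simplex on four points `(p₀₀, p₀₁, p₁₀, p₁₁)`. -/
def simplex4 : Set (Fin 4 → ℝ) := {p | (∀ i, 0 ≤ p i) ∧ ∑ i, p i = 1}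

lemma simplex4_mem_iff {p : Fin 4 → ℝ} :
    p ∈ simplex4 ↔ (∀ i, 0 ≤ p i) ∧ p 0 + p 1 + p 2 + p 3 = 1 := by
  simp [simplex4, Fin.sum_univ_four]

/-- Dimension reduction for symmetric functions: if `f` is continuous and satisfies the
symmetry `f(p₀₀,p₀₁,p₁₀,p₁₁) = f(p₁₁,p₁₀,p₀₁,p₀₀)`, and
`g(c) = max{f(p) : p ∈ simplex, p₀₁+p₁₀ = c}`, then the upper concave envelope of `g` on
`[0,1]` at `ρ` equals the upper concave envelope of `f` on the simplex at the symmetric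
point `((1−ρ)/2, ρ/2, ρ/2, (1−ρ)/2)`. -/
theorem stmt_18 (f : ℝ → ℝ → ℝ → ℝ → ℝ)
    (hcont : Continuous fun p : Fin 4 → ℝ => f (p 0) (p 1) (p 2) (p 3))
    (hsym : ∀ a b c d : ℝ, f a b c d = f d c b a)
    (ρ : ℝ) (hρ : ρ ∈ Set.Icc (0:ℝ) 1) :
    concaveEnvelope (Set.Icc (0:ℝ) 1)
        (fun c => sSup ((fun p : Fin 4 → ℝ => f (p 0) (p 1) (p 2) (p 3))
          '' {p | p ∈ simplex4 ∧ p 1 + p 2 = c})) ρ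
      = concaveEnvelope simplex4 (fun p => f (p 0) (p 1) (p 2) (p 3))
          ![(1 - ρ) / 2, ρ / 2, ρ / 2, (1 - ρ) / 2] := by
  classical
  set F : (Fin 4 → ℝ) → ℝ := fun p => f (p 0) (p 1) (p 2) (p 3) with hFdef
  set T : ℝ → (Fin 4 → ℝ) := fun c => ![(1 - c) / 2, c / 2, c / 2, (1 - c) / 2] with hTdef
  have hT0 : ∀ c, T c 0 = (1 - c) / 2 := fun c => rfl
  have hT1 : ∀ c, T c 1 = c / 2 := fun c => rfl
  have hT2 : ∀ c, T c 2 = c / 2 := fun c => rfl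
  have hT3 : ∀ c, T c 3 = (1 - c) / 2 := fun c => rfl
  have hTmem : ∀ c ∈ Set.Icc (0:ℝ) 1, T c ∈ simplex4 := by
    intro c hc
    rw [simplex4_mem_iff]
    constructor
    · intro i
      fin_cases i <;> simp [hTdef] <;> linarith [hc.1, hc.2]
    · rw [hT0, hT1, hT2, hT3]; ring
  have hTsum : ∀ c, T c 1 + T c 2 = c := by
    intro c; rw [hT1, hT2]; ring
  -- compactness and boundedness
  have hcompact : IsCompact simplex4 := by
    have : simplex4 = stdSimplex ℝ (Fin 4) := rfl
    rw [this]; exact isCompact_stdSimplex _ _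
  have hbdd : BddAbove (F '' simplex4) := hcompact.bddAbove_image hcont.continuousOn
  have hslice : ∀ c, BddAbove (F '' {p | p ∈ simplex4 ∧ p 1 + p 2 = c}) :=
    fun c => hbdd.mono (Set.image_mono (fun p hp => hp.1))
  have hsum_mem : ∀ p ∈ simplex4, p 1 + p 2 ∈ Set.Icc (0:ℝ) 1 := by
    intro p hp
    rw [simplex4_mem_iff] at hp
    exact ⟨by linarith [hp.1 1, hp.1 2], by linarith [hp.1 0, hp.1 3, hp.2]⟩
  unfold concaveEnvelope
  congr 1
  ext t
  simp only [Set.mem_setOf_eq]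
  constructor
  · -- from a witness on [0,1] build one on the simplex
    rintro ⟨ψ, hψconc, hψdom, ht⟩
    refine ⟨fun p => ψ (p 1 + p 2), ?_, ?_, ?_⟩
    · refine ⟨convex_stdSimplex ℝ (Fin 4), ?_⟩
      intro x hx y hy a b ha hb hab
      have hx' := hsum_mem x hx
      have hy' := hsum_mem y hy
      have h1 : (a • x + b • y) 1 + (a • x + b • y) 2
          = a • (x 1 + x 2) + b • (y 1 + y 2) := by
        simp [Pi.add_apply, Pi.smul_apply, smul_eq_mul]; ring
      show a • ψ (x 1 + x 2) + b • ψ (y 1 + y 2)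
          ≤ ψ ((a • x + b • y) 1 + (a • x + b • y) 2)
      rw [h1]
      exact hψconc.2 hx' hy' ha hb hab
    · intro p hp
      have h1 : F p ≤ sSup (F '' {q | q ∈ simplex4 ∧ q 1 + q 2 = p 1 + p 2}) :=
        le_csSup (hslice _) ⟨p, ⟨hp, rfl⟩, rfl⟩
      exact h1.trans (hψdom _ (hsum_mem p hp))
    · have : (![(1 - ρ) / 2, ρ / 2, ρ / 2, (1 - ρ) / 2] : Fin 4 → ℝ) 1
          + (![(1 - ρ) / 2, ρ / 2, ρ / 2, (1 - ρ) / 2] : Fin 4 → ℝ) 2 = ρ := hTsum ρ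
      show t = ψ ((![(1 - ρ) / 2, ρ / 2, ρ / 2, (1 - ρ) / 2] : Fin 4 → ℝ) 1
          + (![(1 - ρ) / 2, ρ / 2, ρ / 2, (1 - ρ) / 2] : Fin 4 → ℝ) 2)
      rw [this]; exact ht
  · -- from a witness on the simplex build one on [0,1]
    rintro ⟨φ, hφconc, hφdom, ht⟩
    refine ⟨fun c => φ (T c), ?_, ?_, ht⟩
    · refine ⟨convex_Icc 0 1, ?_⟩
      intro x hx y hy a b ha hb hab
      have hTaff : T (a • x + b • y) = a • T x + b • T y := by
        funext i
        fin_cases i <;>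
          simp [hTdef, smul_eq_mul] <;> ring_nf <;> nlinarith [hab]
      show a • φ (T x) + b • φ (T y) ≤ φ (T (a • x + b • y))
      rw [hTaff]
      exact hφconc.2 (hTmem x hx) (hTmem y hy) ha hb hab
    · intro c hc
      refine csSup_le ⟨F (T c), ⟨T c, ⟨hTmem c hc, hTsum c⟩, rfl⟩⟩ ?_
      rintro _ ⟨p, ⟨hp, hpc⟩, rfl⟩
      -- swap trick
      set p' : Fin 4 → ℝ := ![p 3, p 2, p 1, p 0] with hp'def
      have hp'0 : p' 0 = p 3 := rfl
      have hp'1 : p' 1 = p 2 := rfl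
      have hp'2 : p' 2 = p 1 := rfl
      have hp'3 : p' 3 = p 0 := rfl
      rw [simplex4_mem_iff] at hp
      have hp'mem : p' ∈ simplex4 := by
        rw [simplex4_mem_iff]
        constructor
        · intro i; fin_cases i <;>
            simp only [hp'0, hp'1, hp'2, hp'3] <;> exact hp.1 _
        · rw [hp'0, hp'1, hp'2, hp'3]; linarith [hp.2]
      have hFp' : F p' = F p := by
        show f (p' 0) (p' 1) (p' 2) (p' 3) = f (p 0) (p 1) (p 2) (p 3)
        rw [hp'0, hp'1, hp'2, hp'3]
        exact hsym (p 3) (p 2) (p 1) (p 0)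
      have hmid : T c = (1/2 : ℝ) • p + (1/2 : ℝ) • p' := by
        funext i
        fin_cases i <;>
          simp [hTdef, hp'def, Pi.add_apply, Pi.smul_apply, smul_eq_mul] <;>
          linarith [hp.2, hpc]
      have hconc := hφconc.2 (by rw [simplex4_mem_iff]; exact hp) hp'mem
        (by norm_num : (0:ℝ) ≤ 1/2) (by norm_num : (0:ℝ) ≤ 1/2) (by norm_num)
      rw [← hmid] at hconc
      have h1 : F p ≤ φ p := hφdom p (by rw [simplex4_mem_iff]; exact hp)
      have h2 : F p ≤ φ p' := hFp' ▸ hφdom p' hp'mem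
      have : (1/2 : ℝ) • φ p + (1/2 : ℝ) • φ p' ≥ F p := by
        simp only [smul_eq_mul]; linarith
      linarith [hconc, this]
end
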